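/- Let S and T be orders with S non-zero, let R = S × T, let π: R → S be the natural projection, and let (A,G) ∈ GpRg(R). Then (π(A), π(G)) ∈ GpRg(S), and π restricts to a group isomorphism from G onto π(G). -/

import Mathlib

/-- The natural ring homomorphism `A[G] → R` for a subring `A ⊆ R` and a subgroup `G ⊆ Rˣ`. -/
noncomputable def gpRgHom {R : Type*} [CommRing R] (A : Subring R) (G : Subgroup Rˣ) :
    MonoidAlgebra A G →+* R :=
  MonoidAlgebra.liftNCRingHom A.subtype ((Units.coeHom R).comp G.subtype)
    (fun _ _ => Commute.all _ _)

/-- `A[G] = R`: the natural map `A[G] → R` is a ring isomorphism. -/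
def IsGpRg {R : Type*} [CommRing R] (A : Subring R) (G : Subgroup Rˣ) : Prop :=
  Function.Bijective (gpRgHom A G)



lemma int_eq_zero_of_forall_pow_dvd {p : ℕ} (hp : 2 ≤ p) (z : ℤ) (h : ∀ k : ℕ, (p:ℤ)^k ∣ z) :
    z = 0 := by
  by_contra hz
  obtain ⟨k, hk⟩ : ∃ k : ℕ, z.natAbs < p ^ k :=
    ⟨z.natAbs, lt_of_lt_of_le (Nat.lt_two_pow_self) (Nat.pow_le_pow_left hp _)⟩
  have h2 : (p:ℤ)^k ≤ |z| := Int.le_of_dvd (abs_pos.mpr hz) ((dvd_abs _ _).mpr (h k))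
  have h3 : (p:ℤ)^k ≤ (z.natAbs : ℤ) := by rwa [Int.abs_eq_natAbs] at h2
  have h4 : (p^k : ℕ) ≤ z.natAbs := by exact_mod_cast h3
  omega

lemma free_eq_zero_of_forall_pow_dvd {R : Type*} [CommRing R] [Module.Free ℤ R]
    [Module.Finite ℤ R] {p : ℕ} (hp : 2 ≤ p) (x : R)
    (h : ∀ k : ℕ, ∃ c : R, x = (p:R)^k * c) : x = 0 := by
  classical
  let b := Module.Free.chooseBasis ℤ R
  have hco : ∀ i, b.repr x i = 0 := by
    intro i
    apply int_eq_zero_of_forall_pow_dvd hp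
    intro k
    obtain ⟨c, hc⟩ := h k
    have : x = ((p:ℤ)^k) • c := by
      rw [zsmul_eq_mul, hc]; push_cast; ring
    rw [this, map_smul]
    exact ⟨b.repr c i, by simp⟩
  have h0 : b.repr x = 0 := by ext i; simpa using hco i
  have := congrArg b.repr.symm h0
  simpa using this



lemma idem_coeff_eq_zero {A : Type*} [CommRing A] {G : Type*} [CommGroup G] [Finite G]
    (hA : ∀ p : ℕ, 2 ≤ p → ∀ x : A, (∀ k : ℕ, ((p:ℕ):A)^k ∣ x) → x = 0)
    (f : MonoidAlgebra A G) (hf : f * f = f) {h : G} (hh : h ≠ 1) : f.coeff h = 0 := by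
  classical
  have : Fintype G := Fintype.ofFinite G
  have ho : orderOf h ≠ 0 := (orderOf_pos h).ne'
  have ho1 : orderOf h ≠ 1 := by
    simpa [orderOf_eq_one_iff] using hh
  obtain ⟨p, hp, hpd⟩ := Nat.exists_prime_and_dvd ho1
  have hp2 : 2 ≤ p := hp.two_le
  haveI : Fact p.Prime := ⟨hp⟩
  by_cases hu : IsUnit ((p:ℕ):A)
  · have h10 : (1:A) = 0 := hA p hp2 1 (fun k => (hu.pow k).dvd)
    haveI : Subsingleton A := subsingleton_of_zero_eq_one h10.symm
    exact Subsingleton.elim _ _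
  -- idempotent powers
  have hfpow : ∀ n : ℕ, f ^ (n + 1) = f := by
    intro n
    induction n with
    | zero => rw [pow_one]
    | succ n ih => rw [pow_succ, ih, hf]
  have hfpowp : ∀ n : ℕ, f ^ p ^ n = f := by
    intro n
    obtain ⟨j, hj⟩ : ∃ j, p ^ n = j + 1 :=
      ⟨p ^ n - 1, (Nat.succ_pred_eq_of_pos (pow_pos hp.pos n)).symm⟩
    rw [hj, hfpow]
  set I : Ideal A := Ideal.span {((p:ℕ):A)} with hI
  haveI : CharP (A ⧸ I) p := CharP.quotient A p (by rwa [mem_nonunits_iff])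
  have hKchar : CharP (MonoidAlgebra (A ⧸ I) G) p := by
    constructor
    intro n
    rw [← map_natCast (MonoidAlgebra.singleOneRingHom : (A ⧸ I) →+* MonoidAlgebra (A ⧸ I) G) n]
    show MonoidAlgebra.single (1:G) ((n : A ⧸ I)) = 0 ↔ _
    rw [MonoidAlgebra.single_eq_zero, CharP.cast_eq_zero_iff (A ⧸ I) p]
  haveI := hKchar
  haveI : ExpChar (MonoidAlgebra (A ⧸ I) G) p := expChar_prime _ p
  set mk' : A →+* A ⧸ I := Ideal.Quotient.mk I with hmk
  set Ψ : MonoidAlgebra A G →+* MonoidAlgebra (A ⧸ I) G :=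
    MonoidAlgebra.liftNCRingHom (MonoidAlgebra.singleOneRingHom.comp mk')
      (MonoidAlgebra.of (A ⧸ I) G) (fun _ _ => Commute.all _ _) with hΨ
  have hΨs : ∀ (g : G) (a : A), Ψ (MonoidAlgebra.single g a) = MonoidAlgebra.single g (mk' a) := by
    intro g a
    rw [hΨ]
    show MonoidAlgebra.liftNC _ _ (MonoidAlgebra.single g a) = _
    rw [MonoidAlgebra.liftNC_single]
    show MonoidAlgebra.single 1 (mk' a) * MonoidAlgebra.single g 1 = _
    rw [MonoidAlgebra.single_mul_single, one_mul, mul_one]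
  have hΨapply : ∀ (w : MonoidAlgebra A G) (x : G), (Ψ w).coeff x = mk' (w.coeff x) := by
    intro w x
    induction w using MonoidAlgebra.induction_linear with
    | zero => simp
    | add a b ha hb => rw [map_add, MonoidAlgebra.coeff_add, Finsupp.add_apply, ha, hb, MonoidAlgebra.coeff_add, Finsupp.add_apply, map_add]
    | single g a =>
        rw [hΨs, MonoidAlgebra.coeff_single, MonoidAlgebra.coeff_single, Finsupp.single_apply, Finsupp.single_apply, apply_ite mk', map_zero]
  -- choice of m
  set m : ℕ := Fintype.card G with hm
  have hppow : ∀ g : G, ¬ p ∣ orderOf (g ^ p ^ m) := by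
    intro g
    have hog : orderOf g ≠ 0 := (orderOf_pos g).ne'
    have hkm : (orderOf g).factorization p ≤ m := by
      have h1 : (orderOf g).factorization p < p ^ (orderOf g).factorization p :=
        Nat.lt_pow_self hp.one_lt
      have h2 : p ^ (orderOf g).factorization p ≤ m :=
        Nat.le_of_dvd Fintype.card_pos ((Nat.ordProj_dvd _ p).trans orderOf_dvd_card)
      omega
    have hdvd : orderOf g ∣ p ^ m * ordCompl[p] (orderOf g) := by
      conv_lhs => rw [← Nat.ordProj_mul_ordCompl_eq_self (orderOf g) p]
      exact mul_dvd_mul (pow_dvd_pow p hkm) dvd_rfl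
    have h1 : (g ^ p ^ m) ^ ordCompl[p] (orderOf g) = 1 := by
      rw [← pow_mul]
      exact orderOf_dvd_iff_pow_eq_one.mp hdvd
    intro hpd2
    exact Nat.not_dvd_ordCompl hp hog (hpd2.trans (orderOf_dvd_of_pow_eq_one h1))
  set F : MonoidAlgebra A G :=
    ∑ g ∈ f.coeff.support, MonoidAlgebra.single (g ^ p ^ m) ((f.coeff g) ^ p ^ m) with hF
  have hF0 : ∀ x ∈ F.coeff.support, ¬ p ∣ orderOf x := by
    intro x hx
    rw [hF, MonoidAlgebra.coeff_sum] at hx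
    obtain ⟨g, -, hg⟩ := Finsupp.mem_support_finset_sum x hx
    have := Finsupp.support_single_subset hg
    rw [Finset.mem_singleton] at this
    rw [this]
    exact hppow g
  have hFpow : ∀ n : ℕ, ∀ x ∈ (F ^ (n + 1)).coeff.support, ¬ p ∣ orderOf x := by
    intro n
    induction n with
    | zero => simpa using hF0
    | succ n ih =>
      intro x hx hdx
      rw [pow_succ] at hx
      have hsub := MonoidAlgebra.support_coeff_mul_subset (F ^ (n + 1)) F hx
      obtain ⟨y, hy, z, hz, rfl⟩ := Finset.mem_mul.mp hsub
      have hdl : orderOf (y * z) ∣ orderOf y * orderOf z :=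
        ((Commute.all y z).orderOf_mul_dvd_lcm).trans
          (Nat.lcm_dvd (dvd_mul_right _ _) (dvd_mul_left _ _))
      rcases hp.dvd_mul.mp (hdx.trans hdl) with h' | h'
      · exact ih y hy h'
      · exact hF0 z hz h'
  -- single-divisibility helpers
  have hdvd_of : ∀ (c : A) (w : MonoidAlgebra A G), (∀ x : G, c ∣ w.coeff x) →
      (MonoidAlgebra.single (1:G) c) ∣ w := by
    intro c w hw
    refine ⟨∑ x ∈ w.coeff.support, MonoidAlgebra.single x (Classical.choose (hw x)), ?_⟩
    rw [Finset.mul_sum]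
    have he : ∀ x ∈ w.coeff.support,
        MonoidAlgebra.single (1:G) c * MonoidAlgebra.single x (Classical.choose (hw x)) =
          MonoidAlgebra.single x (w.coeff x) := by
      intro x _
      rw [MonoidAlgebra.single_mul_single, one_mul, ← Classical.choose_spec (hw x)]
    rw [Finset.sum_congr rfl he]
    conv_lhs => rw [← MonoidAlgebra.sum_coeff_single w]
    rfl
  have hdvd_coeff : ∀ (c : A) (w : MonoidAlgebra A G),
      (MonoidAlgebra.single (1:G) c) ∣ w → ∀ x : G, c ∣ w.coeff x := by
    rintro c w ⟨z, rfl⟩ x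
    rw [MonoidAlgebra.coeff_single_one_mul]
    exact Dvd.intro _ rfl
  have e_cast : ((p:ℕ) : MonoidAlgebra A G) = MonoidAlgebra.single (1:G) ((p:ℕ):A) := by
    rw [← map_natCast (MonoidAlgebra.singleOneRingHom : A →+* MonoidAlgebra A G) p]
    rfl
  -- the key congruence
  have hfF : (MonoidAlgebra.single (1:G) ((p:ℕ):A)) ∣ f - F := by
    apply hdvd_of
    intro x
    have h0 : mk' ((f - F).coeff x) = 0 := by
      rw [← hΨapply, map_sub]
      have e1 : Ψ f = ∑ g ∈ f.coeff.support, MonoidAlgebra.single g (mk' (f.coeff g)) := by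
        conv_lhs => rw [← MonoidAlgebra.sum_coeff_single f, Finsupp.sum]
        rw [map_sum]
        exact Finset.sum_congr rfl fun g _ => hΨs g (f.coeff g)
      have e3 : (Ψ f) ^ p ^ m = ∑ g ∈ f.coeff.support,
          MonoidAlgebra.single (g ^ p ^ m) ((mk' (f.coeff g)) ^ p ^ m) := by
        rw [e1, sum_pow_char_pow]
        exact Finset.sum_congr rfl fun g _ => MonoidAlgebra.single_pow _ _ _
      have e2 : Ψ F = (Ψ f) ^ p ^ m := by
        rw [hF, map_sum, e3]
        refine Finset.sum_congr rfl fun g _ => ?_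
        rw [hΨs, map_pow]
      rw [e2, ← map_pow, hfpowp, sub_self, MonoidAlgebra.coeff_zero, Finsupp.zero_apply]
    rw [Ideal.Quotient.eq_zero_iff_mem, hI, Ideal.mem_span_singleton] at h0
    exact h0
  have hpK : ((p:ℕ) : MonoidAlgebra A G) ∣ f - F := by rw [e_cast]; exact hfF
  have key : ∀ k : ℕ, (((p:ℕ):A)) ^ (k + 1) ∣ f.coeff h := by
    intro k
    have hd := dvd_sub_pow_of_dvd_sub hpK k
    rw [hfpowp] at hd
    have hd2 : (MonoidAlgebra.single (1:G) (((p:ℕ):A) ^ (k+1))) ∣ f - F ^ p ^ k := by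
      have : ((p:ℕ) : MonoidAlgebra A G) ^ (k+1) =
          MonoidAlgebra.single (1:G) (((p:ℕ):A) ^ (k+1)) := by
        rw [e_cast, MonoidAlgebra.single_pow, one_pow]
      rwa [← Nat.cast_pow, Nat.cast_pow, this] at hd
    have := hdvd_coeff _ _ hd2 h
    have hFh : (F ^ p ^ k).coeff h = 0 := by
      apply Finsupp.notMem_support_iff.mp
      intro hmem
      obtain ⟨j, hj⟩ : ∃ j, p ^ k = j + 1 :=
        ⟨p ^ k - 1, (Nat.succ_pred_eq_of_pos (pow_pos hp.pos k)).symm⟩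
      rw [hj] at hmem
      exact hFpow j h hmem hpd
    rw [MonoidAlgebra.coeff_sub, Finsupp.sub_apply, hFh, sub_zero] at this
    exact this
  apply hA p hp2
  intro k
  exact (pow_dvd_pow _ (Nat.le_succ k)).trans (key k)


lemma gpRgHom_single {R : Type*} [CommRing R] (A : Subring R) (G : Subgroup Rˣ)
    (g : G) (a : A) :
    gpRgHom A G (MonoidAlgebra.single g a) = (a : R) * ((g : Rˣ) : R) := by
  rw [gpRgHom]
  show MonoidAlgebra.liftNC _ _ (MonoidAlgebra.single g a) = _
  rw [MonoidAlgebra.liftNC_single]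
  rfl

set_option maxHeartbeats 1000000 in
/-- Let `S` and `T` be orders with `S` non-zero, `R = S × T`, and
`π : R → S` the projection. If `(A,G) ∈ GpRg(R)`, then `(π(A), π(G)) ∈ GpRg(S)` and `π`
restricts to a group isomorphism from `G` onto `π(G)`. -/
theorem gpRg_projection
    {S : Type u} [CommRing S] [Nontrivial S] [Module.Free ℤ S] [Module.Finite ℤ S]
    {T : Type v} [CommRing T] [Module.Free ℤ T] [Module.Finite ℤ T]
    (A : Subring (S × T)) (G : Subgroup (S × T)ˣ) (hAG : IsGpRg A G) :
    IsGpRg (A.map (RingHom.fst S T))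
        (G.map (Units.map (RingHom.fst S T).toMonoidHom)) ∧
      Set.InjOn (Units.map (RingHom.fst S T).toMonoidHom) G := by
  classical
  set π : S × T →+* S := RingHom.fst S T with hπ
  set φ := gpRgHom A G with hφdef
  set B := A.map π with hB
  set G' := G.map (Units.map π.toMonoidHom) with hG'
  -- divisibility condition on A
  have hAcond : ∀ p : ℕ, 2 ≤ p → ∀ x : A, (∀ k : ℕ, ((p:ℕ):A)^k ∣ x) → x = 0 := by
    intro p hp x hx
    have hxR : (x : S × T) = 0 := by
      apply free_eq_zero_of_forall_pow_dvd hp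
      intro k
      obtain ⟨cc, hcc⟩ := hx k
      refine ⟨(cc : S × T), ?_⟩
      rw [hcc]
      push_cast
      ring
    exact_mod_cast hxR
  -- G is finite
  haveI hfinG : Finite G := by
    have hli : LinearIndependent ℤ (fun g : G => ((g : (S×T)ˣ) : S × T)) := by
      rw [linearIndependent_iff']
      intro s gcoef hsum i hi
      have hφ0 : φ (∑ j ∈ s, MonoidAlgebra.single j (gcoef j • (1 : A))) = 0 := by
        rw [map_sum]
        rw [Finset.sum_congr rfl (fun j _ => gpRgHom_single A G j (gcoef j • (1 : A)))]
        rw [← hsum]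
        refine Finset.sum_congr rfl fun j _ => ?_
        push_cast
        rw [zsmul_eq_mul, zsmul_eq_mul, mul_one]
      have hx0 : (∑ j ∈ s, MonoidAlgebra.single j (gcoef j • (1 : A))) = 0 :=
        hAG.1 (by rw [hφ0, map_zero])
      have hcoef : gcoef i • (1 : A) = 0 := by
        have : (∑ j ∈ s, MonoidAlgebra.single j (gcoef j • (1:A))).coeff i =
            (0 : MonoidAlgebra A G).coeff i := congrArg (fun w : MonoidAlgebra A G => w.coeff i) hx0
        rw [MonoidAlgebra.coeff_sum, Finsupp.finset_sum_apply, MonoidAlgebra.coeff_zero, Finsupp.zero_apply] at this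
        rwa [Finset.sum_eq_single i
          (fun j _ hj => by rw [MonoidAlgebra.coeff_single, Finsupp.single_apply, if_neg hj])
          (fun hni => absurd hi hni), MonoidAlgebra.coeff_single, Finsupp.single_apply, if_pos rfl] at this
      have : gcoef i • (1 : S × T) = 0 := by
        have := congrArg (fun a : A => (a : S × T)) hcoef
        simpa using this
      have h1 : (1 : S × T) ≠ 0 := one_ne_zero
      rcases smul_eq_zero.mp this with h | h
      · exact h
      · exact absurd h h1
    exact hli.finite_of_isNoetherian
  -- the idempotent (0,1)
  obtain ⟨f, hfe⟩ := hAG.2 (((0:S), (1:T)) : S × T)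
  have hidem : f * f = f := by
    apply hAG.1
    rw [map_mul, hfe]
    rw [show (((0:S),(1:T)) : S × T) * ((0:S),(1:T)) = ((0:S),(1:T)) by
      rw [Prod.mk_mul_mk, mul_zero, mul_one]]
  have hcoeffz : ∀ h : G, h ≠ 1 → f.coeff h = 0 := fun h hh =>
    idem_coeff_eq_zero hAcond f hidem hh
  set c : A := f.coeff 1 with hc
  have hfc : f = MonoidAlgebra.single 1 c := by
    refine MonoidAlgebra.ext (Finsupp.ext fun g => ?_)
    by_cases hg : g = 1
    · subst hg; rw [MonoidAlgebra.coeff_single, Finsupp.single_apply, if_pos rfl]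
    · rw [hcoeffz g hg, MonoidAlgebra.coeff_single, Finsupp.single_apply, if_neg (Ne.symm hg)]
  have hcR : ((c : S × T)) = ((0:S), (1:T)) := by
    have h1 := hfe
    rw [hfc, gpRgHom_single] at h1
    simpa using h1
  -- InjOn
  have hinj : Set.InjOn (Units.map π.toMonoidHom) G := by
    intro u hu v hv huv
    by_contra hne
    set gu : G := ⟨u, hu⟩ with hgu
    set gv : G := ⟨v, hv⟩ with hgv
    have hguv : gu ≠ gv := fun hh => hne (congrArg (fun z : G => (z : (S×T)ˣ)) hh)
    have h1 : ((u : S×T)).1 = ((v : S×T)).1 := by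
      have := congrArg (Units.val) huv
      simpa [hπ] using this
    have h2 : ((c : S×T)) * ((u : S×T) - (v : S×T)) = (u : S×T) - (v : S×T) := by
      rw [hcR]
      refine Prod.ext ?_ ?_
      · simp [h1]
      · simp
    have h3 : φ (MonoidAlgebra.single (1:G) c *
        (MonoidAlgebra.single gu 1 - MonoidAlgebra.single gv 1)) =
        φ (MonoidAlgebra.single gu 1 - MonoidAlgebra.single gv 1) := by
      rw [map_mul, map_sub, gpRgHom_single, gpRgHom_single, gpRgHom_single]
      simp only [OneMemClass.coe_one, Units.val_one, one_mul, mul_one]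
      exact h2
    have h4 := hAG.1 h3
    rw [mul_sub, MonoidAlgebra.single_mul_single, MonoidAlgebra.single_mul_single] at h4
    simp only [one_mul, mul_one] at h4
    have h5 : ((MonoidAlgebra.single gu c - MonoidAlgebra.single gv c : MonoidAlgebra A G)).coeff gu =
        ((MonoidAlgebra.single gu (1:A) - MonoidAlgebra.single gv 1 : MonoidAlgebra A G)).coeff gu :=
      congrArg (fun w : MonoidAlgebra A G => w.coeff gu) h4
    rw [MonoidAlgebra.coeff_sub, MonoidAlgebra.coeff_sub, Finsupp.sub_apply, Finsupp.sub_apply] at h5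
    simp only [MonoidAlgebra.coeff_single] at h5
    rw [Finsupp.single_apply, Finsupp.single_apply, Finsupp.single_apply,
      Finsupp.single_apply, if_pos rfl, if_pos rfl, if_neg hguv.symm, if_neg hguv.symm,
      sub_zero, sub_zero] at h5
    -- h5 : c = 1
    have h6 : ((c : S × T)).1 = 1 := by rw [h5]; rfl
    rw [hcR] at h6
    exact one_ne_zero h6.symm
  refine ⟨⟨?_, ?_⟩, hinj⟩
  · -- injectivity
    intro y₁ y₂ hy
    have hsub : gpRgHom B G' (y₁ - y₂) = 0 := by rw [map_sub, hy, sub_self]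
    have hker : y₁ - y₂ = 0 := by
      set y := y₁ - y₂ with hy'
      clear_value y
      clear hy hy' y₁ y₂
      choose gσ hσ1 hσ2 using fun h : G' => Subgroup.mem_map.mp h.2
      choose aα hα1 hα2 using fun h : G' => Subring.mem_map.mp (y.coeff h).2
      set x : MonoidAlgebra A G :=
        ∑ h ∈ y.coeff.support, MonoidAlgebra.single (⟨gσ h, hσ1 h⟩ : G) (⟨aα h, hα1 h⟩ : A) with hx
      have hπφ : (φ x).1 = 0 := by
        rw [hx, map_sum]
        have e1 : ∀ h ∈ y.coeff.support,
            φ (MonoidAlgebra.single (⟨gσ h, hσ1 h⟩ : G) (⟨aα h, hα1 h⟩ : A)) =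
              (aα h) * ((gσ h : (S×T)ˣ) : S × T) := fun h _ => gpRgHom_single A G _ _
        rw [Finset.sum_congr rfl e1]
        have e2 : (∑ h ∈ y.coeff.support, (aα h) * ((gσ h : (S×T)ˣ) : S × T)).1 =
            ∑ h ∈ y.coeff.support, ((y.coeff h : S) * ((h : Sˣ) : S)) := by
          rw [Prod.fst_sum]
          refine Finset.sum_congr rfl fun h _ => ?_
          rw [Prod.fst_mul]
          congr 1
          · exact hα2 h
          · have := congrArg (Units.val) (hσ2 h)
            simpa [hπ] using this
        rw [e2]
        have e3 : ∑ h ∈ y.coeff.support, ((y.coeff h : S) * ((h : Sˣ) : S)) = gpRgHom B G' y := by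
          conv_rhs => rw [← MonoidAlgebra.sum_coeff_single y, Finsupp.sum, map_sum]
          exact (Finset.sum_congr rfl fun h _ => (gpRgHom_single B G' h (y.coeff h)).symm)
        rw [e3, hsub]
      have h2 : MonoidAlgebra.single (1:G) c * x = x := by
        apply hAG.1
        have hφc : φ (MonoidAlgebra.single (1:G) c) = (((0:S),(1:T)) : S × T) := by
          rw [gpRgHom_single]; simpa using hcR
        rw [map_mul, hφc]
        refine Prod.ext ?_ ?_
        · rw [Prod.fst_mul, hπφ]; simp
        · rw [Prod.snd_mul]; simp
      refine MonoidAlgebra.ext (Finsupp.ext fun h => ?_)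
      rw [MonoidAlgebra.coeff_zero, Finsupp.zero_apply]
      by_cases hh : h ∈ y.coeff.support
      · have hgσinj : ∀ h' ∈ y.coeff.support, h' ≠ h → (⟨gσ h', hσ1 h'⟩ : G) ≠ ⟨gσ h, hσ1 h⟩ := by
          intro h' _ hne heq
          apply hne
          have : Units.map π.toMonoidHom (gσ h') = Units.map π.toMonoidHom (gσ h) := by
            rw [show gσ h' = gσ h from congrArg Subtype.val heq]
          rw [hσ2 h', hσ2 h] at this
          exact Subtype.ext this
        have hx_at : x.coeff (⟨gσ h, hσ1 h⟩ : G) = (⟨aα h, hα1 h⟩ : A) := by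
          rw [hx, MonoidAlgebra.coeff_sum, Finsupp.finset_sum_apply]
          rw [Finset.sum_eq_single h
            (fun h' hmem hne => by
              rw [MonoidAlgebra.coeff_single, Finsupp.single_apply, if_neg (hgσinj h' hmem hne)])
            (fun hni => absurd hh hni)]
          rw [MonoidAlgebra.coeff_single, Finsupp.single_apply, if_pos rfl]
        have h3 : ((MonoidAlgebra.single (1:G) c * x : MonoidAlgebra A G)).coeff (⟨gσ h, hσ1 h⟩ : G) =
            x.coeff (⟨gσ h, hσ1 h⟩ : G) :=
          congrArg (fun w : MonoidAlgebra A G => w.coeff (⟨gσ h, hσ1 h⟩ : G)) h2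
        rw [MonoidAlgebra.coeff_single_one_mul, hx_at] at h3
        -- h3 : c * ⟨aα h, _⟩ = ⟨aα h, _⟩
        have h4 : ((c : S × T) * (aα h)).1 = (aα h).1 := by
          have := congrArg (fun a : A => ((a : S × T)).1) h3
          simpa using this
        rw [hcR] at h4
        simp only [Prod.fst_mul, zero_mul] at h4
        -- (aα h).1 = 0, but (aα h).1 = y h
        have h5 : (y.coeff h : S) = 0 := by rw [← hα2 h]; exact h4.symm
        exact Subtype.ext h5
      · exact Finsupp.notMem_support_iff.mp hh
    exact sub_eq_zero.mp hker
  · -- surjectivity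
    intro s
    obtain ⟨x, hx⟩ := hAG.2 (((s, 0) : S × T))
    refine ⟨∑ g ∈ x.coeff.support, MonoidAlgebra.single
      (⟨Units.map π.toMonoidHom g, Subgroup.mem_map.mpr ⟨(g : (S×T)ˣ), g.2, rfl⟩⟩ : G')
      (⟨π (x.coeff g : S × T), Subring.mem_map.mpr ⟨(x.coeff g : S × T), (x.coeff g).2, rfl⟩⟩ : B), ?_⟩
    rw [map_sum]
    have e1 : ∀ g ∈ x.coeff.support,
        gpRgHom B G' (MonoidAlgebra.single
          (⟨Units.map π.toMonoidHom g, Subgroup.mem_map.mpr ⟨(g : (S×T)ˣ), g.2, rfl⟩⟩ : G')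
          (⟨π (x.coeff g : S × T), Subring.mem_map.mpr ⟨(x.coeff g : S × T), (x.coeff g).2, rfl⟩⟩ : B)) =
        ((x.coeff g : S × T) * ((g : (S×T)ˣ) : S × T)).1 := by
      intro g _
      rw [gpRgHom_single, Prod.fst_mul]
      rfl
    rw [Finset.sum_congr rfl e1, ← Prod.fst_sum]
    have e2 : ∑ g ∈ x.coeff.support, ((x.coeff g : S × T) * ((g : (S×T)ˣ) : S × T)) = φ x := by
      conv_rhs => rw [← MonoidAlgebra.sum_coeff_single x, Finsupp.sum, map_sum]
      exact (Finset.sum_congr rfl fun g _ => (gpRgHom_single A G g (x.coeff g)).symm)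
    rw [e2, hx]
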